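/- For every n ≥ 1, the code C_{q,ℓ,r}(n) is a zero-error code for the (ℓ,r)-0-insertion channel: any two distinct codewords of C_{q,ℓ,r}(n) are non-confusable. -/

import Mathlib

namespace ZeroErrorDup

/-- Output relation of the (ℓ,r)-0-insertion channel acting on strings over the
alphabet A_q = {0,1,…,q−1} (encoded as lists of naturals): after each input symbol,
`c` copies of the block `0^ℓ` are inserted, for some `c ∈ {0,1,…,r}`. -/
inductive IsOutput (ℓ r : ℕ) : List ℕ → List ℕ → Prop
  | nil : IsOutput ℓ r [] []
  | cons (a : ℕ) (c : ℕ) (hc : c ≤ r) {x y : List ℕ} :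
      IsOutput ℓ r x y → IsOutput ℓ r (a :: x) (a :: (List.replicate (c * ℓ) 0 ++ y))

/-- Two strings are confusable if some string is an output of both. -/
def Confusable (ℓ r : ℕ) (x y : List ℕ) : Prop :=
  ∃ z, IsOutput ℓ r x z ∧ IsOutput ℓ r y z

/-- A set of strings is a zero-error code if every two distinct elements are
non-confusable. -/
def ZeroErrorCode (ℓ r : ℕ) (C : Set (List ℕ)) : Prop :=
  ∀ x ∈ C, ∀ y ∈ C, x ≠ y → ¬ Confusable ℓ r x y

/-- `L ℓ r i j = ((r i + 1)(r ℓ + 1)^j − 1)/r − 1` (the division is exact). -/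
def L (ℓ r i j : ℕ) : ℕ := ((r * i + 1) * (r * ℓ + 1) ^ j - 1) / r - 1

/-- The block `σ 0^u`: the symbol `σ` followed by a run of `u` zeros. -/
def block (σ u : ℕ) : List ℕ := σ :: List.replicate u 0

/-- `B q ℓ r`: the set of blocks `σ 0^{L(i,j)}` with `σ ∈ {1,…,q−1}`, `1 ≤ i ≤ ℓ`, `j ≥ 0`. -/
def B (q ℓ r : ℕ) : Set (List ℕ) :=
  { b | ∃ σ i j : ℕ, 1 ≤ σ ∧ σ ≤ q - 1 ∧ 1 ≤ i ∧ i ≤ ℓ ∧ b = block σ (L ℓ r i j) }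

/-- `S q n`: strings over `A_q` of length between 1 and `n` whose first symbol is nonzero. -/
def S (q n : ℕ) : Set (List ℕ) :=
  { x | x ≠ [] ∧ x.length ≤ n ∧ (∀ a ∈ x, a < q) ∧ x.headI ≠ 0 }

/-- `C q ℓ r n`: strings in `S q n` that are concatenations of blocks from `B q ℓ r`. -/
def C (q ℓ r n : ℕ) : Set (List ℕ) :=
  { x | x ∈ S q n ∧ ∃ bs : List (List ℕ), (∀ b ∈ bs, b ∈ B q ℓ r) ∧ x = bs.flatten }

lemma L_key (ℓ r i j : ℕ) (hr : 1 ≤ r) (hi : 1 ≤ i) :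
    r * (L ℓ r i j + 1) + 1 = (r * i + 1) * (r * ℓ + 1) ^ j := by
  set M := (r * i + 1) * (r * ℓ + 1) ^ j with hM
  have h1 : r * i + 1 ≡ 1 [MOD r] := by
    unfold Nat.ModEq; simp [Nat.add_mod, Nat.mul_mod_right]
  have h2 : r * ℓ + 1 ≡ 1 [MOD r] := by
    unfold Nat.ModEq; simp [Nat.add_mod, Nat.mul_mod_right]
  have hMe : M ≡ 1 [MOD r] := by simpa using h1.mul (h2.pow j)
  have hMge : r + 1 ≤ M := by
    have h3 : 1 ≤ (r * ℓ + 1) ^ j := Nat.one_le_pow _ _ (by omega)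
    calc r + 1 ≤ r * i + 1 := by nlinarith
    _ = (r * i + 1) * 1 := by ring
    _ ≤ M := Nat.mul_le_mul_left _ h3
  have hdvd : r ∣ M - 1 := (Nat.modEq_iff_dvd' (by omega)).1 hMe.symm
  obtain ⟨t, ht⟩ := hdvd
  have hMt : M = r * t + 1 := (Nat.sub_eq_iff_eq_add (by omega)).1 ht
  have ht1 : 1 ≤ t := by nlinarith
  have hL : L ℓ r i j = t - 1 := by
    unfold L
    rw [← hM, ht, Nat.mul_div_cancel_left _ (by omega : 0 < r)]
  rw [hL, Nat.sub_add_cancel ht1]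
  linarith

lemma L_mod (ℓ r i j : ℕ) (hr : 1 ≤ r) (hi : 1 ≤ i) :
    (L ℓ r i j + 1) % ℓ = i % ℓ := by
  have key := L_key ℓ r i j hr hi
  have h2 : (r * ℓ + 1) ^ j ≡ 1 [MOD r * ℓ] := by
    have : r * ℓ + 1 ≡ 1 [MOD r * ℓ] := by
      unfold Nat.ModEq; simp [Nat.add_mod, Nat.mul_mod_right]
    simpa using this.pow j
  have hMe : r * (L ℓ r i j + 1) + 1 ≡ r * i + 1 [MOD r * ℓ] := by
    calc r * (L ℓ r i j + 1) + 1 = (r * i + 1) * (r * ℓ + 1) ^ j := key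
    _ ≡ (r * i + 1) * 1 [MOD r * ℓ] := (Nat.ModEq.refl _).mul h2
    _ = r * i + 1 := by ring
  have hMe2 : r * (L ℓ r i j + 1) ≡ r * i [MOD r * ℓ] := by
    have := Nat.ModEq.add_right_cancel' 1 hMe
    simpa using this
  exact Nat.ModEq.mul_left_cancel' (by omega) hMe2

lemma gap (ℓ r i j j' : ℕ) (hℓ : 1 ≤ ℓ) (hr : 1 ≤ r) (hi : 1 ≤ i) (hj : j < j') :
    L ℓ r i j + r * (L ℓ r i j + 1) * ℓ < L ℓ r i j' := by
  have k1 := L_key ℓ r i j hr hi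
  have k2 := L_key ℓ r i j' hr hi
  set u := L ℓ r i j
  set v := L ℓ r i j'
  have hpow : (r * ℓ + 1) ^ (j + 1) ≤ (r * ℓ + 1) ^ j' :=
    Nat.pow_le_pow_right (by omega) (by omega)
  have h1 : (r * (u + 1) + 1) * (r * ℓ + 1) ≤ r * (v + 1) + 1 := by
    calc (r * (u + 1) + 1) * (r * ℓ + 1) = (r * i + 1) * (r * ℓ + 1) ^ (j + 1) := by
          rw [pow_succ, ← Nat.mul_assoc, ← k1]
    _ ≤ (r * i + 1) * (r * ℓ + 1) ^ j' := Nat.mul_le_mul_left _ hpow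
    _ = r * (v + 1) + 1 := k2.symm
  have h2 : r * ((u + 1) + (u + 1) * (r * ℓ) + ℓ) ≤ r * (v + 1) := by nlinarith
  have h3 : (u + 1) + (u + 1) * (r * ℓ) + ℓ ≤ v + 1 :=
    Nat.le_of_mul_le_mul_left h2 (by omega)
  nlinarith

lemma mod_det {ℓ i i' : ℕ} (hi : 1 ≤ i) (hi2 : i ≤ ℓ) (hi' : 1 ≤ i') (hi'2 : i' ≤ ℓ)
    (h : i % ℓ = i' % ℓ) : i = i' := by
  rcases eq_or_lt_of_le hi2 with h1 | h1 <;> rcases eq_or_lt_of_le hi'2 with h2 | h2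
  · omega
  · rw [h1, Nat.mod_self, Nat.mod_eq_of_lt h2] at h; omega
  · rw [h2, Nat.mod_self, Nat.mod_eq_of_lt h1] at h; omega
  · rw [Nat.mod_eq_of_lt h1, Nat.mod_eq_of_lt h2] at h; omega

lemma L_inj {ℓ r i j i' j' k m : ℕ} (hℓ : 1 ≤ ℓ) (hr : 1 ≤ r)
    (hi : 1 ≤ i) (hi2 : i ≤ ℓ) (hi' : 1 ≤ i') (hi'2 : i' ≤ ℓ)
    (hk : k ≤ r * (L ℓ r i j + 1)) (hm : m ≤ r * (L ℓ r i' j' + 1))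
    (heq : L ℓ r i j + k * ℓ = L ℓ r i' j' + m * ℓ) : L ℓ r i j = L ℓ r i' j' := by
  have hmod : (L ℓ r i j + 1) % ℓ = (L ℓ r i' j' + 1) % ℓ := by
    have : (L ℓ r i j + 1 + k * ℓ) % ℓ = (L ℓ r i' j' + 1 + m * ℓ) % ℓ := by
      congr 1; omega
    simpa [Nat.add_mul_mod_self_right] using this
  have hii : i = i' := mod_det hi hi2 hi' hi'2
    (by rw [← L_mod ℓ r i j hr hi, ← L_mod ℓ r i' j' hr hi', hmod])
  subst hii
  rcases Nat.lt_trichotomy j j' with h | h | h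
  · exfalso
    have hg := gap ℓ r i j j' hℓ hr hi h
    have : k * ℓ ≤ r * (L ℓ r i j + 1) * ℓ := Nat.mul_le_mul_right _ hk
    omega
  · rw [h]
  · exfalso
    have hg := gap ℓ r i j' j hℓ hr hi h
    have : m * ℓ ≤ r * (L ℓ r i j' + 1) * ℓ := Nat.mul_le_mul_right _ hm
    omega


lemma output_nil_out {ℓ r : ℕ} {z : List ℕ} (h : IsOutput ℓ r [] z) : z = [] := by
  cases h; rfl

lemma output_nil_in {ℓ r : ℕ} {x : List ℕ} (h : IsOutput ℓ r x []) : x = [] := by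
  cases h; rfl

lemma output_good {ℓ r : ℕ} {x z : List ℕ} (hx : x = [] ∨ x.headI ≠ 0)
    (h : IsOutput ℓ r x z) : z = [] ∨ z.headI ≠ 0 := by
  cases h with
  | nil => exact Or.inl rfl
  | cons a c hc h' => right; simpa using hx

lemma rep_merge (a b : ℕ) (l : List ℕ) :
    List.replicate a 0 ++ 0 :: (List.replicate b 0 ++ l) =
      List.replicate (a + (1 + b)) 0 ++ l := by
  rw [List.replicate_add, Nat.one_add, List.replicate_succ, List.append_assoc, List.cons_append]

lemma block_output {ℓ r : ℕ} :
    ∀ (u σ : ℕ) (x' z : List ℕ),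
    IsOutput ℓ r (σ :: (List.replicate u 0 ++ x')) z →
    ∃ k z', k ≤ r * (u + 1) ∧ z = σ :: (List.replicate (u + k * ℓ) 0 ++ z') ∧
      IsOutput ℓ r x' z' := by
  intro u
  induction u with
  | zero =>
    intro σ x' z h
    simp only [List.replicate, List.nil_append] at h
    cases h with
    | cons a c hc h' =>
      exact ⟨c, _, by omega, by simp, h'⟩
  | succ u ih =>
    intro σ x' z h
    rw [List.replicate_succ, List.cons_append] at h
    cases h with
    | cons a c hc h' =>
      obtain ⟨k, z', hk, rfl, hz'⟩ := ih 0 x' _ h'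
      refine ⟨c + k, z', ?_, ?_, hz'⟩
      · calc c + k ≤ r + r * (u + 1) := Nat.add_le_add hc hk
        _ = r * (u + 1 + 1) := by ring
      · congr 1
        rw [rep_merge]
        congr 2
        ring

lemma zeros_cancel : ∀ (a : ℕ) {b : ℕ} {z₁ z₂ : List ℕ},
    (z₁ = [] ∨ z₁.headI ≠ 0) → (z₂ = [] ∨ z₂.headI ≠ 0) →
    List.replicate a 0 ++ z₁ = List.replicate b 0 ++ z₂ → a = b ∧ z₁ = z₂ := by
  intro a
  induction a with
  | zero =>
    intro b z₁ z₂ h1 h2 heq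
    cases b with
    | zero => simpa using heq
    | succ b =>
      exfalso
      rw [List.replicate_succ] at heq
      simp only [List.replicate_zero, List.nil_append] at heq
      rcases h1 with rfl | h1
      · simp at heq
      · rw [heq] at h1; simp at h1
  | succ a ih =>
    intro b z₁ z₂ h1 h2 heq
    cases b with
    | zero =>
      exfalso
      rw [List.replicate_succ] at heq
      simp only [List.replicate_zero, List.nil_append] at heq
      rcases h2 with rfl | h2
      · simp at heq
      · rw [← heq] at h2; simp at h2
    | succ b =>
      rw [List.replicate_succ, List.replicate_succ] at heq
      simp only [List.cons_append, List.cons.injEq] at heq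
      obtain ⟨hab, hz⟩ := ih h1 h2 heq.2
      exact ⟨by omega, hz⟩

lemma flatten_good (q ℓ r : ℕ) : ∀ bs : List (List ℕ), (∀ b ∈ bs, b ∈ B q ℓ r) →
    bs.flatten = [] ∨ bs.flatten.headI ≠ 0 := by
  intro bs hbs
  cases bs with
  | nil => exact Or.inl rfl
  | cons b bs =>
    obtain ⟨σ, i, j, hσ, _, hi, hi2, hb⟩ := hbs b List.mem_cons_self
    right
    rw [List.flatten_cons, hb]
    simp [block]
    omega

lemma main_eq (q ℓ r : ℕ) (hℓ : 1 ≤ ℓ) (hr : 1 ≤ r) :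
    ∀ (bs cs : List (List ℕ)) (z : List ℕ),
    (∀ b ∈ bs, b ∈ B q ℓ r) → (∀ b ∈ cs, b ∈ B q ℓ r) →
    IsOutput ℓ r bs.flatten z → IsOutput ℓ r cs.flatten z →
    bs.flatten = cs.flatten := by
  intro bs
  induction bs with
  | nil =>
    intro cs z _ _ h1 h2
    rw [List.flatten_nil] at h1 ⊢
    have hz := output_nil_out h1
    subst hz
    exact (output_nil_in h2).symm
  | cons b bs ih =>
    intro cs z hbs hcs h1 h2
    obtain ⟨σ, i, j, hσ, _, hi, hi2, hb⟩ := hbs b List.mem_cons_self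
    rw [List.flatten_cons, hb] at h1
    simp only [block, List.cons_append] at h1
    obtain ⟨k, z₁, hk, hzeq, hz₁⟩ := block_output _ _ _ _ h1
    subst hzeq
    cases cs with
    | nil =>
      rw [List.flatten_nil] at h2
      exact absurd (output_nil_out h2) (by simp)
    | cons c cs =>
      obtain ⟨τ, i', j', hτ, _, hi', hi2', hc⟩ := hcs c List.mem_cons_self
      rw [List.flatten_cons, hc] at h2
      simp only [block, List.cons_append] at h2
      obtain ⟨m, z₂, hm, heq, hz₂⟩ := block_output _ _ _ _ h2
      have hστ : σ = τ := by injection heq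
      have htail : List.replicate (L ℓ r i j + k * ℓ) 0 ++ z₁ =
          List.replicate (L ℓ r i' j' + m * ℓ) 0 ++ z₂ := by injection heq
      have g1 : z₁ = [] ∨ z₁.headI ≠ 0 :=
        output_good (flatten_good q ℓ r bs (fun b hb' => hbs b (List.mem_cons_of_mem _ hb'))) hz₁
      have g2 : z₂ = [] ∨ z₂.headI ≠ 0 :=
        output_good (flatten_good q ℓ r cs (fun b hb' => hcs b (List.mem_cons_of_mem _ hb'))) hz₂
      obtain ⟨hlen, hz12⟩ := zeros_cancel _ g1 g2 htail
      have huv : L ℓ r i j = L ℓ r i' j' :=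
        L_inj hℓ hr hi hi2 hi' hi2' (by linarith [hk]) (by linarith [hm]) hlen
      have htails : bs.flatten = cs.flatten := by
        apply ih cs z₁ (fun b hb' => hbs b (List.mem_cons_of_mem _ hb'))
          (fun b hb' => hcs b (List.mem_cons_of_mem _ hb')) hz₁
        rw [hz12]; exact hz₂
      rw [List.flatten_cons, List.flatten_cons, hb, hc, htails, block, block, hστ, huv]

/-- for every `n ≥ 1`, `C q ℓ r n` is a zero-error code for the
(ℓ,r)-0-insertion channel. -/
theorem stmt1 (q ℓ r n : ℕ) (hq : 2 ≤ q) (hℓ : 1 ≤ ℓ) (hr : 1 ≤ r) (hn : 1 ≤ n) :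
    ZeroErrorCode ℓ r (C q ℓ r n) := by
  rintro x hx y hy hne ⟨z, h1, h2⟩
  obtain ⟨-, bs, hbs, rfl⟩ := hx
  obtain ⟨-, cs, hcs, rfl⟩ := hy
  exact hne (main_eq q ℓ r hℓ hr bs cs z hbs hcs h1 h2)

end ZeroErrorDup
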